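/- arXiv:2304.12375 — 4 statements merged into one kernel-verified Lean document; each statement's English description precedes it below -/
import Mathlib

section
/- Let A_n → A and B_n → B in the Hausdorff metric, with all sets nonempty compact subsets of ℝ^d. Then the upper Kuratowski limit of the sequence of sets Π(A_n, B_n) ⊆ ℝ^d × ℝ^d is contained in Π(A,B). -/
open Filter Metric Topology Set TopologicalSpace

noncomputable section

/-- The set of projections of `x` on `B`: points of `B` nearest to `x`. -/
def metricProj {E : Type*} [MetricSpace E] (x : E) (B : Set E) : Set E :=
  {b ∈ B | dist x b = Metric.infDist x B}

/-- The set of metric pairs of `A` and `B`. -/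
def MetricPairs {E : Type*} [MetricSpace E] (A B : Set E) : Set (E × E) :=
  {p | p.1 ∈ A ∧ p.2 ∈ B ∧ (p.1 ∈ metricProj p.2 A ∨ p.2 ∈ metricProj p.1 B)}

/-- A partition `a = x_0 < x_1 < ... < x_n = b` of `[a,b]`. -/
structure IntervalPartition (a b : ℝ) where
  n : ℕ
  pts : Fin (n + 1) → ℝ
  mono : StrictMono pts
  first : pts 0 = a
  last : pts (Fin.last n) = b

/-- The norm `|χ| = max_i (x_{i+1} - x_i)` of a partition. -/
noncomputable def IntervalPartition.meshNorm {a b : ℝ} (χ : IntervalPartition a b) : ℝ :=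
  ⨆ i : Fin χ.n, (χ.pts i.succ - χ.pts i.castSucc)

/-- `c` is a chain function of the set-valued function `F` based on the partition `χ`:
it is piecewise constant, with values at consecutive partition points forming metric pairs
of the corresponding values of `F`. -/
def IsChainFun {E : Type*} [MetricSpace E] {a b : ℝ}
    (F : ℝ → Set E) (χ : IntervalPartition a b) (c : ℝ → E) : Prop :=
  ∃ y : Fin (χ.n + 1) → E,
    (∀ i : Fin χ.n,
      (y i.castSucc, y i.succ) ∈ MetricPairs (F (χ.pts i.castSucc)) (F (χ.pts i.succ))) ∧
    (∀ i : Fin χ.n, ∀ t ∈ Set.Ico (χ.pts i.castSucc) (χ.pts i.succ), c t = y i.castSucc) ∧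
    c b = y (Fin.last χ.n)

/-- `s` is a metric selection of `F` on `[a,b]`: a selection of `F` which is the pointwise
limit of a sequence of chain functions of `F` whose partition norms tend to `0`. -/
def IsMetricSelection {E : Type*} [MetricSpace E] (F : ℝ → Set E) (a b : ℝ) (s : ℝ → E) : Prop :=
  (∀ x ∈ Set.Icc a b, s x ∈ F x) ∧
  ∃ χ : ℕ → IntervalPartition a b, ∃ c : ℕ → ℝ → E,
    (∀ k, IsChainFun F (χ k) (c k)) ∧
    Filter.Tendsto (fun k => (χ k).meshNorm) Filter.atTop (nhds 0) ∧
    ∀ x ∈ Set.Icc a b, Filter.Tendsto (fun k => c k x) Filter.atTop (nhds (s x))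

/-- Property 2 of `F` at `ξ`, with `Fm = F(ξ-)`, `Fp = F(ξ+)`: every metric pair of the
one-sided limits is a limit of metric pairs `(y_n^-, y_n^+) ∈ Π(F(ξ_n^-), F(ξ_n^+))`
with `ξ_n^- < ξ < ξ_n^+`, `ξ_n^± → ξ`. -/
def Property2 {E : Type*} [MetricSpace E] (F : ℝ → Set E) (a b ξ : ℝ)
    (Fm Fp : Set E) : Prop :=
  ∀ ym yp : E, (ym, yp) ∈ MetricPairs Fm Fp →
    ∃ ξm ξp : ℕ → ℝ, ∃ ym' yp' : ℕ → E,
      (∀ n, ξm n ∈ Set.Ico a ξ) ∧ (∀ n, ξp n ∈ Set.Ioc ξ b) ∧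
      Filter.Tendsto ξm Filter.atTop (nhds ξ) ∧ Filter.Tendsto ξp Filter.atTop (nhds ξ) ∧
      (∀ n, (ym' n, yp' n) ∈ MetricPairs (F (ξm n)) (F (ξp n))) ∧
      Filter.Tendsto ym' Filter.atTop (nhds ym) ∧ Filter.Tendsto yp' Filter.atTop (nhds yp)

/-- The metric average `(1/2) A ⊕ (1/2) B = {(a+b)/2 : (a,b) ∈ Π(A,B)}`. -/
def metricAvg {E : Type*} [NormedAddCommGroup E] [NormedSpace ℝ E] (A B : Set E) : Set E :=
  {v | ∃ p ∈ MetricPairs A B, v = (2⁻¹ : ℝ) • (p.1 + p.2)}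

/-- The limit set `A_F(x) = {(s(x-) + s(x+))/2 : s a metric selection of F}`. -/
def limitSet {E : Type*} [NormedAddCommGroup E] [NormedSpace ℝ E]
    (F : ℝ → Set E) (a b x : ℝ) : Set E :=
  {v | ∃ s : ℝ → E, ∃ sm sp : E, IsMetricSelection F a b s ∧
      Filter.Tendsto s (nhdsWithin x (Set.Ico a x)) (nhds sm) ∧
      Filter.Tendsto s (nhdsWithin x (Set.Ioc x b)) (nhds sp) ∧
      v = (2⁻¹ : ℝ) • (sm + sp)}

/-- The left local quasi-modulus `ω̃⁻(f, xs, δ)` of `f` at `xs`, where `fl = f(xs-)`. -/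
noncomputable def qmodLeft {X : Type*} [PseudoMetricSpace X]
    (f : ℝ → X) (fl : X) (a b xs δ : ℝ) : ℝ :=
  sSup {r | ∃ x ∈ Set.Ico (xs - δ) xs ∩ Set.Icc a b, r = dist fl (f x)}

/-- The right local quasi-modulus `ω̃⁺(f, xs, δ)` of `f` at `xs`, where `fr = f(xs+)`. -/
noncomputable def qmodRight {X : Type*} [PseudoMetricSpace X]
    (f : ℝ → X) (fr : X) (a b xs δ : ℝ) : ℝ :=
  sSup {r | ∃ x ∈ Set.Ioc xs (xs + δ) ∩ Set.Icc a b, r = dist fr (f x)}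

/-- The graph of a set-valued function on `[a,b]` is compact. -/
def HasCompactGraph {E : Type*} [MetricSpace E] (F : ℝ → Set E) (a b : ℝ) : Prop :=
  IsCompact {p : ℝ × E | p.1 ∈ Set.Icc a b ∧ p.2 ∈ F p.1}

/-- The (real-valued) variation function `v_f(x) = V_a^x(f)`. -/
noncomputable def varFun {X : Type*} [PseudoEMetricSpace X] (f : ℝ → X) (a x : ℝ) : ℝ :=
  (eVariationOn f (Set.Icc a x)).toReal

/-- Upper Kuratowski limit of a sequence of sets in a topological space. -/
def kuratowskiLimsup {X : Type*} [TopologicalSpace X] (C : ℕ → Set X) : Set X :=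
  {x | ∃ φ : ℕ → ℕ, StrictMono φ ∧ ∃ c : ℕ → X,
    (∀ k, c k ∈ C (φ k)) ∧ Filter.Tendsto c Filter.atTop (nhds x)}

lemma mem_limit' {E : Type*} [MetricSpace E] (S : ℕ → Set E) (T : Set E)
    (hT : IsCompact T) (hTne : T.Nonempty) (hSne : ∀ n, (S n).Nonempty)
    (hSb : ∀ n, Bornology.IsBounded (S n))
    (hconv : Tendsto (fun n => hausdorffDist (S n) T) atTop (nhds 0))
    (z : ℕ → E) (z₀ : E) (hz : Tendsto z atTop (nhds z₀)) (hmem : ∀ n, z n ∈ S n) :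
    z₀ ∈ T := by
  have hfin : ∀ n, EMetric.hausdorffEdist (S n) T ≠ ⊤ := fun n =>
    hausdorffEdist_ne_top_of_nonempty_of_bounded (hSne n) hTne (hSb n) hT.isBounded
  have h1 : Tendsto (fun n => infDist (z n) T) atTop (nhds 0) := by
    apply squeeze_zero (fun n => infDist_nonneg) (fun n => ?_) hconv
    calc infDist (z n) T ≤ infDist (z n) (S n) + hausdorffDist (S n) T :=
          infDist_le_infDist_add_hausdorffDist (hfin n)
      _ = hausdorffDist (S n) T := by
          rw [infDist_zero_of_mem (hmem n), zero_add]
  have h2 : Tendsto (fun n => infDist (z n) T) atTop (nhds (infDist z₀ T)) :=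
    ((continuous_infDist_pt T).continuousAt).tendsto.comp hz
  have : infDist z₀ T = 0 := tendsto_nhds_unique h2 h1
  have := hT.isClosed
  rw [← this.closure_eq]
  exact (mem_closure_iff_infDist_zero hTne).2 ‹infDist z₀ T = 0›

lemma key' {E : Type*} [MetricSpace E] (S : ℕ → Set E) (T : Set E)
    (hT : IsCompact T) (hTne : T.Nonempty) (hSne : ∀ n, (S n).Nonempty)
    (hSb : ∀ n, Bornology.IsBounded (S n))
    (hconv : Tendsto (fun n => hausdorffDist (S n) T) atTop (nhds 0))
    (x y : ℕ → E) (x₀ y₀ : E) (hx : Tendsto x atTop (nhds x₀))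
    (hy : Tendsto y atTop (nhds y₀))
    (hmem : ∀ n, x n ∈ metricProj (y n) (S n)) :
    x₀ ∈ metricProj y₀ T := by
  have hfin : ∀ n, EMetric.hausdorffEdist (S n) T ≠ ⊤ := fun n =>
    hausdorffEdist_ne_top_of_nonempty_of_bounded (hSne n) hTne (hSb n) hT.isBounded
  refine ⟨mem_limit' S T hT hTne hSne hSb hconv x x₀ hx (fun n => (hmem n).1), ?_⟩
  have hlim : Tendsto (fun n => infDist (y n) (S n)) atTop (nhds (infDist y₀ T)) := by
    rw [tendsto_iff_dist_tendsto_zero]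
    apply squeeze_zero (fun n => dist_nonneg) (fun n => ?_)
      (by simpa using hconv.add (tendsto_iff_dist_tendsto_zero.1 hy))
    · calc dist (infDist (y n) (S n)) (infDist y₀ T)
          ≤ dist (infDist (y n) (S n)) (infDist (y n) T)
            + dist (infDist (y n) T) (infDist y₀ T) := dist_triangle _ _ _
        _ ≤ hausdorffDist (S n) T + dist (y n) y₀ := by
            gcongr
            · rw [Real.dist_eq, abs_sub_le_iff]
              constructor
              · linarith [infDist_le_infDist_add_hausdorffDist (x := y n)
                  (hausdorffEdist_ne_top_of_nonempty_of_bounded hTne (hSne n)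
                    hT.isBounded (hSb n)), hausdorffDist_comm (s := S n) (t := T)]
              · linarith [infDist_le_infDist_add_hausdorffDist (x := y n) (hfin n)]
            · exact (lipschitz_infDist_pt T).dist_le_mul (y n) y₀ |>.trans (by simp)
  have hd : Tendsto (fun n => dist (y n) (x n)) atTop (nhds (dist y₀ x₀)) :=
    (hy.dist hx)
  have heq : (fun n => dist (y n) (x n)) = fun n => infDist (y n) (S n) :=
    funext fun n => (hmem n).2
  rw [heq] at hd
  exact tendsto_nhds_unique hd hlim

/-- the upper Kuratowski limit of `Π(A_n, B_n)` is contained in `Π(A,B)`. -/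
theorem stmt_2 {d : ℕ} (A B : Set (EuclideanSpace ℝ (Fin d)))
    (An Bn : ℕ → Set (EuclideanSpace ℝ (Fin d)))
    (hA : IsCompact A) (hAne : A.Nonempty) (hB : IsCompact B) (hBne : B.Nonempty)
    (hAn : ∀ n, IsCompact (An n)) (hAnne : ∀ n, (An n).Nonempty)
    (hBn : ∀ n, IsCompact (Bn n)) (hBnne : ∀ n, (Bn n).Nonempty)
    (hAconv : Filter.Tendsto (fun n => Metric.hausdorffDist (An n) A) Filter.atTop (nhds 0))
    (hBconv : Filter.Tendsto (fun n => Metric.hausdorffDist (Bn n) B) Filter.atTop (nhds 0)) :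
    kuratowskiLimsup (fun n => MetricPairs (An n) (Bn n)) ⊆ MetricPairs A B := by
  rintro p ⟨φ, hφ, c, hc, hcp⟩
  have hφt : Tendsto φ atTop atTop := hφ.tendsto_atTop
  have hAc : Tendsto (fun k => hausdorffDist (An (φ k)) A) atTop (nhds 0) := hAconv.comp hφt
  have hBc : Tendsto (fun k => hausdorffDist (Bn (φ k)) B) atTop (nhds 0) := hBconv.comp hφt
  have hx : Tendsto (fun k => (c k).1) atTop (nhds p.1) :=
    (continuous_fst.tendsto p).comp hcp
  have hy : Tendsto (fun k => (c k).2) atTop (nhds p.2) :=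
    (continuous_snd.tendsto p).comp hcp
  have h1 : p.1 ∈ A :=
    mem_limit' (fun k => An (φ k)) A hA hAne (fun k => hAnne _)
      (fun k => (hAn _).isBounded) hAc _ _ hx (fun k => (hc k).1)
  have h2 : p.2 ∈ B :=
    mem_limit' (fun k => Bn (φ k)) B hB hBne (fun k => hBnne _)
      (fun k => (hBn _).isBounded) hBc _ _ hy (fun k => (hc k).2.1)
  have hor : (∃ᶠ k in atTop, (c k).1 ∈ metricProj (c k).2 (An (φ k))) ∨
      (∃ᶠ k in atTop, (c k).2 ∈ metricProj (c k).1 (Bn (φ k))) := by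
    rw [← frequently_or_distrib]
    exact Filter.Frequently.of_forall (fun k => (hc k).2.2)
  rcases hor with h | h
  · obtain ⟨ψ, hψ, hψP⟩ := extraction_of_frequently_atTop h
    refine ⟨h1, h2, Or.inl ?_⟩
    exact key' (fun j => An (φ (ψ j))) A hA hAne (fun j => hAnne _)
      (fun j => (hAn _).isBounded) (hAc.comp hψ.tendsto_atTop)
      (fun j => (c (ψ j)).1) (fun j => (c (ψ j)).2) p.1 p.2
      (hx.comp hψ.tendsto_atTop) (hy.comp hψ.tendsto_atTop) hψP
  · obtain ⟨ψ, hψ, hψP⟩ := extraction_of_frequently_atTop h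
    refine ⟨h1, h2, Or.inr ?_⟩
    exact key' (fun j => Bn (φ (ψ j))) B hB hBne (fun j => hBnne _)
      (fun j => (hBn _).isBounded) (hBc.comp hψ.tendsto_atTop)
      (fun j => (c (ψ j)).2) (fun j => (c (ψ j)).1) p.2 p.1
      (hy.comp hψ.tendsto_atTop) (hx.comp hψ.tendsto_atTop) hψP
end
end

section
/- Let F : [a,b] → K(ℝ^d) be a set-valued function of bounded variation (in the Hausdorff metric) with compact graph, and let x ∈ (a,b). Then F(x−) ∪ F(x+) ⊆ F(x). -/
open Filter Metric Topology Set TopologicalSpace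

noncomputable section

private lemma stmt8_aux {d : ℕ} (a b : ℝ)
    (F : ℝ → NonemptyCompacts (EuclideanSpace ℝ (Fin d)))
    (hgraph : HasCompactGraph (fun t => (F t : Set (EuclideanSpace ℝ (Fin d)))) a b)
    (x : ℝ) (G : NonemptyCompacts (EuclideanSpace ℝ (Fin d)))
    (l : Filter ℝ) [l.NeBot] (hl : l ≤ Filter.principal (Set.Icc a b))
    (hid : Filter.Tendsto id l (nhds x))
    (hF : Filter.Tendsto F l (nhds G)) :
    (G : Set (EuclideanSpace ℝ (Fin d))) ⊆ (F x : Set (EuclideanSpace ℝ (Fin d))) := by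
  intro y hy
  -- choose nearest point of F t to y
  have hch : ∀ t : ℝ, ∃ z ∈ (F t : Set (EuclideanSpace ℝ (Fin d))),
      Metric.infDist y (F t : Set (EuclideanSpace ℝ (Fin d))) = dist y z :=
    fun t => (F t).isCompact.exists_infDist_eq_dist (F t).nonempty y
  choose g hg hgd using hch
  -- infDist y (F t) → infDist y G = 0
  have hlip := (Metric.lipschitz_infDist_set y).continuous
  have h0 : Filter.Tendsto (fun t => Metric.infDist y (F t : Set (EuclideanSpace ℝ (Fin d))))
      l (nhds 0) := by
    have := (hlip.tendsto G).comp hF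
    rwa [Metric.infDist_zero_of_mem hy] at this
  have hgy : Filter.Tendsto g l (nhds y) := by
    rw [tendsto_iff_dist_tendsto_zero]
    simpa only [dist_comm, ← hgd] using h0
  -- the point (t, g t) lies in the graph and converges to (x, y)
  have hmem : ∀ᶠ t in l, (t, g t) ∈
      {p : ℝ × EuclideanSpace ℝ (Fin d) | p.1 ∈ Set.Icc a b ∧ p.2 ∈ (F p.1 : Set _)} := by
    filter_upwards [hl (Filter.mem_principal_self _)] with t ht
    exact ⟨ht, hg t⟩
  have hten : Filter.Tendsto (fun t => (t, g t)) l (nhds (x, y)) :=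
    (Filter.Tendsto.prodMk_nhds hid hgy)
  have hxy := hgraph.isClosed.mem_of_tendsto hten hmem
  exact hxy.2

/-- for a BV set-valued function with compact graph,
`F(x-) ∪ F(x+) ⊆ F(x)`. -/
theorem stmt_8 {d : ℕ} (a b : ℝ) (hab : a < b)
    (F : ℝ → NonemptyCompacts (EuclideanSpace ℝ (Fin d)))
    (hBV : BoundedVariationOn F (Set.Icc a b))
    (hgraph : HasCompactGraph (fun t => (F t : Set (EuclideanSpace ℝ (Fin d)))) a b)
    (x : ℝ) (hx : x ∈ Set.Ioo a b)
    (Fm Fp : NonemptyCompacts (EuclideanSpace ℝ (Fin d)))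
    (hFm : Filter.Tendsto F (nhdsWithin x (Set.Ico a x)) (nhds Fm))
    (hFp : Filter.Tendsto F (nhdsWithin x (Set.Ioc x b)) (nhds Fp)) :
    (Fm : Set (EuclideanSpace ℝ (Fin d))) ∪ (Fp : Set (EuclideanSpace ℝ (Fin d)))
      ⊆ (F x : Set (EuclideanSpace ℝ (Fin d))) := by
  
  have hax : a < x := hx.1
  have hxb : x < b := hx.2
  have hnbm : (nhdsWithin x (Set.Ico a x)).NeBot := by
    apply mem_closure_iff_nhdsWithin_neBot.mp
    rw [closure_Ico hax.ne]
    exact ⟨hax.le, le_refl x⟩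
  have hnbp : (nhdsWithin x (Set.Ioc x b)).NeBot := by
    apply mem_closure_iff_nhdsWithin_neBot.mp
    rw [closure_Ioc hxb.ne]
    exact ⟨le_refl x, hxb.le⟩
  have hlm : nhdsWithin x (Set.Ico a x) ≤ Filter.principal (Set.Icc a b) :=
    Filter.le_principal_iff.mpr (Filter.mem_of_superset self_mem_nhdsWithin
      (fun t ht => ⟨ht.1, le_of_lt (lt_of_lt_of_le ht.2 hxb.le)⟩))
  have hlp' : nhdsWithin x (Set.Ioc x b) ≤ Filter.principal (Set.Icc a b) :=
    Filter.le_principal_iff.mpr (Filter.mem_of_superset self_mem_nhdsWithin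
      (fun t ht => ⟨le_of_lt (hax.trans ht.1), ht.2⟩))
  rintro y (hy | hy)
  · exact stmt8_aux a b F hgraph x Fm _ hlm nhdsWithin_le_nhds hFm hy
  · exact stmt8_aux a b F hgraph x Fp _ hlp' nhdsWithin_le_nhds hFp hy
end
end

section
/- Let F : [a,b] → K(ℝ^d) be of bounded variation with compact graph, let c be a chain function of F based on a partition χ = {a = x_0 < … < x_n = b}, and suppose a ≤ α ≤ x_j < β ≤ b for some x_j ∈ χ. Then V_{α}^{x_j}(c) ≤ ω̃⁻(v_F, β, β−α+|χ|), where |χ| is the norm of the partition. -/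
open Filter Metric Topology Set TopologicalSpace

noncomputable section

open EMetric in
lemma pair_edist_le_hausdorff {E : Type*} [MetricSpace E] {A B : Set E} {p : E × E}
    (hp : p ∈ MetricPairs A B) : edist p.1 p.2 ≤ hausdorffEdist A B := by
  obtain ⟨h1, h2, h3 | h3⟩ := hp
  · calc edist p.1 p.2 = ENNReal.ofReal (dist p.2 p.1) := by
          rw [edist_dist, dist_comm]
      _ = ENNReal.ofReal (infEdist p.2 A).toReal := by rw [h3.2]; rfl
      _ ≤ infEdist p.2 A := ENNReal.ofReal_toReal_le
      _ ≤ hausdorffEdist B A := infEdist_le_hausdorffEdist_of_mem h2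
      _ = hausdorffEdist A B := hausdorffEdist_comm
  · calc edist p.1 p.2 = ENNReal.ofReal (dist p.1 p.2) := edist_dist _ _
      _ = ENNReal.ofReal (infEdist p.1 B).toReal := by rw [h3.2]; rfl
      _ ≤ infEdist p.1 B := ENNReal.ofReal_toReal_le
      _ ≤ hausdorffEdist A B := infEdist_le_hausdorffEdist_of_mem h1

lemma nc_edist_eq {α : Type*} [MetricSpace α] (s t : TopologicalSpace.NonemptyCompacts α) :
    edist s t = EMetric.hausdorffEdist (s : Set α) t := rfl

open EMetric in
lemma chain_step {E : Type*} [MetricSpace E]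
    (F : ℝ → TopologicalSpace.NonemptyCompacts E) {u v : ℝ} {p : E × E}
    (hp : p ∈ MetricPairs (F u : Set E) (F v : Set E)) (huv : u ≤ v)
    (hfin : eVariationOn F (Set.Icc u v) ≠ ⊤) :
    dist p.1 p.2 ≤ (eVariationOn F (Set.Icc u v)).toReal := by
  have h1 : edist p.1 p.2 ≤ hausdorffEdist (F u : Set E) (F v : Set E) :=
    pair_edist_le_hausdorff hp
  have h2 : edist (F u) (F v) ≤ eVariationOn F (Set.Icc u v) :=
    eVariationOn.edist_le F (Set.left_mem_Icc.2 huv) (Set.right_mem_Icc.2 huv)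
  rw [nc_edist_eq] at h2
  calc dist p.1 p.2 = (edist p.1 p.2).toReal := dist_edist _ _
    _ ≤ _ := ENNReal.toReal_mono hfin (h1.trans h2)

set_option maxHeartbeats 2000000 in
/-- for a chain function `c` of `F` based on `χ` and `a ≤ α ≤ x_j < β ≤ b`,
`V_α^{x_j}(c) ≤ ω̃⁻(v_F, β, β - α + |χ|)`. -/
theorem stmt_10 {d : ℕ} (a b : ℝ) (hab : a < b)
    (F : ℝ → NonemptyCompacts (EuclideanSpace ℝ (Fin d)))
    (hBV : BoundedVariationOn F (Set.Icc a b))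
    (hgraph : HasCompactGraph (fun t => (F t : Set (EuclideanSpace ℝ (Fin d)))) a b)
    (χ : IntervalPartition a b) (c : ℝ → EuclideanSpace ℝ (Fin d))
    (hc : IsChainFun (fun t => (F t : Set (EuclideanSpace ℝ (Fin d)))) χ c)
    (α β : ℝ) (j : Fin (χ.n + 1))
    (hα : a ≤ α) (hαj : α ≤ χ.pts j) (hjβ : χ.pts j < β) (hβ : β ≤ b)
    (vl : ℝ)
    (hvl : Filter.Tendsto (fun x => varFun F a x) (nhdsWithin β (Set.Ico a β)) (nhds vl)) :
    (eVariationOn c (Set.Icc α (χ.pts j))).toReal ≤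
      qmodLeft (fun x => varFun F a x) vl a b β (β - α + χ.meshNorm) := by
  classical
  obtain ⟨y, hy, hyc, hyb⟩ := hc
  have hx0 : χ.pts 0 = a := χ.first
  have hxl : χ.pts (Fin.last χ.n) = b := χ.last
  have hxmono : StrictMono χ.pts := χ.mono
  have hxa : ∀ i : Fin (χ.n + 1), a ≤ χ.pts i := fun i =>
    hx0.symm.trans_le (hxmono.monotone (Fin.zero_le i))
  have hxb : ∀ i : Fin (χ.n + 1), χ.pts i ≤ b := fun i =>
    (hxmono.monotone (Fin.le_last i)).trans_eq hxl
  set V : ℝ → ℝ := fun t => varFun F a t with hV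
  -- finiteness of variation on subintervals
  have hfin : ∀ s t : ℝ, a ≤ s → t ≤ b → eVariationOn F (Set.Icc s t) ≠ ⊤ := fun s t hs ht =>
    ne_top_of_le_ne_top hBV (eVariationOn.mono F (Set.Icc_subset_Icc hs ht))
  have hVmono : ∀ s t : ℝ, s ≤ t → t ≤ b → V s ≤ V t := fun s t hst htb =>
    ENNReal.toReal_mono (hfin a t le_rfl htb) (eVariationOn.mono F (Set.Icc_subset_Icc le_rfl hst))
  have hV0 : ∀ t, 0 ≤ V t := fun t => ENNReal.toReal_nonneg
  have hVdiff : ∀ s t : ℝ, a ≤ s → s ≤ t → t ≤ b →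
      (eVariationOn F (Set.Icc s t)).toReal = V t - V s := by
    intro s t has hst htb
    have key := eVariationOn.Icc_add_Icc F (s := (Set.univ : Set ℝ)) has hst (Set.mem_univ s)
    simp only [Set.univ_inter] at key
    have h1 := hfin a s le_rfl (hst.trans htb)
    have h2 := hfin s t has htb
    have h3 : V t = V s + (eVariationOn F (Set.Icc s t)).toReal := by
      simp only [hV, varFun, ← key, ENNReal.toReal_add h1 h2]
    linarith
  -- the step estimate from metric pairs
  have hstep : ∀ i : Fin χ.n,
      dist (y i.castSucc) (y i.succ) ≤ V (χ.pts i.succ) - V (χ.pts i.castSucc) := by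
    intro i
    have hle : χ.pts i.castSucc ≤ χ.pts i.succ := (hxmono (Fin.castSucc_lt_succ (i := i))).le
    have h0 := chain_step (E := EuclideanSpace ℝ (Fin d)) F (u := χ.pts i.castSucc)
      (v := χ.pts i.succ) (p := (y i.castSucc, y i.succ)) (hy i) hle (hfin _ _ (hxa _) (hxb _))
    rw [hVdiff _ _ (hxa _) hle (hxb _)] at h0
    exact h0
  -- ℕ-indexed versions
  have hmn : ∀ m : ℕ, min m χ.n < χ.n + 1 := fun m => Nat.lt_succ_of_le (min_le_right m χ.n)
  set x' : ℕ → ℝ := fun m => χ.pts ⟨min m χ.n, hmn m⟩ with hx'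
  set y' : ℕ → EuclideanSpace ℝ (Fin d) := fun m => y ⟨min m χ.n, hmn m⟩ with hy'
  have hx'eq : ∀ (m : ℕ) (h : m < χ.n + 1), x' m = χ.pts ⟨m, h⟩ := fun m h =>
    congrArg χ.pts (Fin.ext (Nat.min_eq_left (Nat.lt_succ_iff.1 h)))
  have hy'eq : ∀ (m : ℕ) (h : m < χ.n + 1), y' m = y ⟨m, h⟩ := fun m h =>
    congrArg y (Fin.ext (Nat.min_eq_left (Nat.lt_succ_iff.1 h)))
  have hx'mono : Monotone x' := fun u v huv =>
    hxmono.monotone (by simp only [Fin.mk_le_mk]; exact min_le_min huv le_rfl)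
  have hx'a : ∀ m, a ≤ x' m := fun m => hxa _
  have hx'b : ∀ m, x' m ≤ b := fun m => hxb _
  have hx'0 : x' 0 = a := by
    rw [hx'eq 0 (Nat.succ_pos χ.n), Fin.mk_zero, hx0]
  have hx'n : x' χ.n = b := by
    rw [hx'eq χ.n (Nat.lt_succ_self χ.n)]
    exact hxl
  -- index function
  set idx : ℝ → ℕ := fun t => Nat.findGreatest (fun m => x' m ≤ t) χ.n with hidx
  have hidx_le : ∀ t, idx t ≤ χ.n := fun t => Nat.findGreatest_le χ.n
  have hidx_spec : ∀ t, a ≤ t → x' (idx t) ≤ t := fun t ht =>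
    Nat.findGreatest_spec (P := fun m => x' m ≤ t) (Nat.zero_le χ.n)
      (show x' 0 ≤ t by rw [hx'0]; exact ht)
  have hidx_mono : ∀ u v : ℝ, a ≤ u → u ≤ v → idx u ≤ idx v := fun u v hau huv =>
    Nat.le_findGreatest (hidx_le u) ((hidx_spec u hau).trans huv)
  have hidx_gt : ∀ t, idx t < χ.n → t < x' (idx t + 1) := by
    intro t hlt
    by_contra h
    exact Nat.findGreatest_is_greatest (Nat.lt_succ_self _) hlt (not_lt.1 h)
  -- chain function values
  have hjn : (j : ℕ) ≤ χ.n := Nat.lt_succ_iff.1 j.isLt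
  have hct : ∀ t ∈ Set.Icc α (χ.pts j), c t = y' (idx t) := by
    intro t ht
    have hat : a ≤ t := hα.trans ht.1
    have htb : t ≤ b := ht.2.trans (hxb j)
    rcases eq_or_lt_of_le htb with rfl | hlt
    · have hidxb : idx t = χ.n := le_antisymm (hidx_le t)
        (Nat.le_findGreatest le_rfl (le_of_eq hx'n))
      rw [hidxb, hy'eq χ.n (Nat.lt_succ_self χ.n)]
      exact hyb
    · have hkn : idx t < χ.n := by
        rcases lt_or_eq_of_le (hidx_le t) with h | h
        · exact h
        · exfalso
          have h2 := hidx_spec t hat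
          rw [h, hx'n] at h2
          exact absurd h2 (not_le.2 hlt)
      have h1 : χ.pts (⟨idx t, hkn⟩ : Fin χ.n).castSucc ≤ t := by
        have h2 := hidx_spec t hat
        rwa [hx'eq (idx t) (Nat.lt_succ_of_lt hkn)] at h2
      have h2 : t < χ.pts (⟨idx t, hkn⟩ : Fin χ.n).succ := by
        have h3 := hidx_gt t hkn
        rwa [hx'eq (idx t + 1) (Nat.succ_lt_succ hkn)] at h3
      have h4 := hyc ⟨idx t, hkn⟩ t ⟨h1, h2⟩
      rw [h4, hy'eq (idx t) (Nat.lt_succ_of_lt hkn)]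
      exact congrArg y (Fin.ext rfl)
  -- distance between chain values
  have hyy : ∀ m m' : ℕ, m ≤ m' → m' ≤ χ.n → dist (y' m) (y' m') ≤ V (x' m') - V (x' m) := by
    intro m m' hmm' hm'n
    have base := dist_le_range_sum_dist (fun k => y' (m + k)) (m' - m)
    simp only [add_zero] at base
    rw [Nat.add_sub_cancel' hmm'] at base
    calc dist (y' m) (y' m')
        ≤ ∑ k ∈ Finset.range (m' - m), dist (y' (m + k)) (y' (m + k + 1)) := base
      _ ≤ ∑ k ∈ Finset.range (m' - m), (V (x' (m + k + 1)) - V (x' (m + k))) := by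
          apply Finset.sum_le_sum
          intro k hk
          have hk1 : m + k + 1 ≤ m' := by
            have := Finset.mem_range.1 hk; omega
          have hklt : m + k < χ.n := lt_of_lt_of_le (by omega) hm'n
          have e1 : y' (m + k) = y (⟨m + k, hklt⟩ : Fin χ.n).castSucc := hy'eq _ _
          have e2 : y' (m + k + 1) = y (⟨m + k, hklt⟩ : Fin χ.n).succ := hy'eq _ _
          have e3 : x' (m + k) = χ.pts (⟨m + k, hklt⟩ : Fin χ.n).castSucc := hx'eq _ _
          have e4 : x' (m + k + 1) = χ.pts (⟨m + k, hklt⟩ : Fin χ.n).succ := hx'eq _ _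
          rw [e1, e2, e3, e4]
          exact hstep ⟨m + k, hklt⟩
      _ = V (x' (m + (m' - m))) - V (x' (m + 0)) := by
          rw [← Finset.sum_range_sub (fun k => V (x' (m + k))) (m' - m)]
          exact Finset.sum_congr rfl fun k _ => by simp [Nat.add_assoc]
      _ = V (x' m') - V (x' m) := by rw [Nat.add_sub_cancel' hmm', add_zero]
  -- idx at χ.pts j and at α
  have hidxj : idx (χ.pts j) = (j : ℕ) := by
    refine le_antisymm ?_ (Nat.le_findGreatest hjn (le_of_eq (by rw [hx'eq (j : ℕ) j.isLt, Fin.eta])))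
    by_contra h
    push_neg at h
    have h1 := hidx_spec (χ.pts j) (hxa j)
    rw [hx'eq (idx (χ.pts j)) (Nat.lt_succ_of_le (hidx_le _))] at h1
    have h2 : χ.pts j < χ.pts ⟨idx (χ.pts j), Nat.lt_succ_of_le (hidx_le _)⟩ :=
      hxmono (by simpa [Fin.lt_def] using h)
    linarith
  have hk0j : idx α ≤ (j : ℕ) := hidxj ▸ hidx_mono α (χ.pts j) hα hαj
  have hxk0α : x' (idx α) ≤ α := hidx_spec α hα
  -- main variation bound
  have hmain : eVariationOn c (Set.Icc α (χ.pts j)) ≤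
      ENNReal.ofReal (V (χ.pts j) - V (x' (idx α))) := by
    rw [eVariationOn]
    apply iSup_le
    rintro ⟨m, u, hu, hus⟩
    set g : ℕ → ℝ := fun i => V (x' (idx (u i))) with hg
    have hgmono : Monotone g := fun i i' hii' =>
      hVmono _ _ (hx'mono (hidx_mono _ _ (hα.trans (hus i).1) (hu hii'))) (hx'b _)
    have hterm : ∀ i, edist (c (u (i + 1))) (c (u i)) ≤ ENNReal.ofReal (g (i + 1) - g i) := by
      intro i
      rw [hct _ (hus (i + 1)), hct _ (hus i), edist_dist, dist_comm]
      apply ENNReal.ofReal_le_ofReal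
      exact hyy _ _ (hidx_mono _ _ (hα.trans (hus i).1) (hu (Nat.le_succ i))) (hidx_le _)
    calc (∑ i ∈ Finset.range m, edist (c (u (i + 1))) (c (u i)))
        ≤ ∑ i ∈ Finset.range m, ENNReal.ofReal (g (i + 1) - g i) :=
          Finset.sum_le_sum fun i _ => hterm i
      _ = ENNReal.ofReal (∑ i ∈ Finset.range m, (g (i + 1) - g i)) :=
          (ENNReal.ofReal_sum_of_nonneg fun i _ => sub_nonneg.2 (hgmono (Nat.le_succ i))).symm
      _ = ENNReal.ofReal (g m - g 0) := by rw [Finset.sum_range_sub g m]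
      _ ≤ ENNReal.ofReal (V (χ.pts j) - V (x' (idx α))) := by
          apply ENNReal.ofReal_le_ofReal
          have hgm : g m ≤ V (χ.pts j) := by
            have h1 : idx (u m) ≤ (j : ℕ) := hidxj ▸ hidx_mono _ _ (hα.trans (hus m).1) (hus m).2
            have h2 : x' (idx (u m)) ≤ χ.pts j := by
              have h3 := hx'mono h1
              rwa [hx'eq (j : ℕ) j.isLt, Fin.eta] at h3
            exact hVmono _ _ h2 (hxb j)
          have hg0 : V (x' (idx α)) ≤ g 0 :=
            hVmono _ _ (hx'mono (hidx_mono _ _ hα (hus 0).1)) (hx'b _)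
          linarith
  have hd0 : 0 ≤ V (χ.pts j) - V (x' (idx α)) :=
    sub_nonneg.2 (hVmono _ _ (hxk0α.trans hαj) (hxb j))
  have h1 : (eVariationOn c (Set.Icc α (χ.pts j))).toReal ≤ V (χ.pts j) - V (x' (idx α)) := by
    have h2 := ENNReal.toReal_mono ENNReal.ofReal_ne_top hmain
    rwa [ENNReal.toReal_ofReal hd0] at h2
  -- vl upper bounds V (χ.pts j)
  have hab' : a < β := lt_of_le_of_lt (hα.trans hαj) hjβ
  haveI hnb : (nhdsWithin β (Set.Ico a β)).NeBot := by
    refine mem_closure_iff_nhdsWithin_neBot.1 ?_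
    rw [closure_Ico hab'.ne]
    exact ⟨hab'.le, le_rfl⟩
  have hvlge : V (χ.pts j) ≤ vl := by
    refine ge_of_tendsto hvl ?_
    have h2 : ∀ᶠ z in nhdsWithin β (Set.Ico a β), χ.pts j < z :=
      eventually_nhdsWithin_of_eventually_nhds (eventually_gt_nhds hjβ)
    filter_upwards [h2, self_mem_nhdsWithin] with z hz1 hz2
    exact hVmono _ _ hz1.le (hz2.2.le.trans hβ)
  -- mesh norm facts
  have hmesh0 : 0 ≤ χ.meshNorm := by
    rcases Nat.eq_zero_or_pos χ.n with h | h
    · haveI : IsEmpty (Fin χ.n) := by rw [h]; infer_instance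
      rw [IntervalPartition.meshNorm]
      exact le_of_eq (Real.iSup_of_isEmpty _).symm
    · have h1 : χ.pts (⟨0, h⟩ : Fin χ.n).succ - χ.pts (⟨0, h⟩ : Fin χ.n).castSucc ≤ χ.meshNorm := by
        unfold IntervalPartition.meshNorm
        exact le_ciSup (f := fun i : Fin χ.n => χ.pts i.succ - χ.pts i.castSucc)
          (Set.Finite.bddAbove (Set.finite_range _)) (⟨0, h⟩ : Fin χ.n)
      have h2 : 0 < χ.pts (⟨0, h⟩ : Fin χ.n).succ - χ.pts (⟨0, h⟩ : Fin χ.n).castSucc :=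
        sub_pos.2 (χ.mono (Fin.castSucc_lt_succ (i := _)))
      linarith
  have hmesh : ∀ i : Fin χ.n, χ.pts i.succ - χ.pts i.castSucc ≤ χ.meshNorm := fun i => by
    unfold IntervalPartition.meshNorm
    exact le_ciSup (f := fun i : Fin χ.n => χ.pts i.succ - χ.pts i.castSucc)
      (Set.Finite.bddAbove (Set.finite_range _)) i
  have hlb : β - (β - α + χ.meshNorm) ≤ x' (idx α) := by
    have h3 : α - χ.meshNorm ≤ x' (idx α) := by
      rcases lt_or_eq_of_le (hidx_le α) with h | h
      · have h1 := hidx_gt α h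
        have h2 := hmesh ⟨idx α, h⟩
        have e1 : x' (idx α) = χ.pts ((⟨idx α, h⟩ : Fin χ.n).castSucc) := hx'eq _ _
        have e2 : x' (idx α + 1) = χ.pts ((⟨idx α, h⟩ : Fin χ.n).succ) := hx'eq _ _
        rw [← e1, ← e2] at h2
        linarith
      · rw [h, hx'n]
        have h4 : α ≤ b := hαj.trans (hxb j)
        linarith
    linarith
  -- conclude via sSup
  rw [qmodLeft]
  have hmem : dist vl (V (x' (idx α))) ∈
      {r | ∃ t ∈ Set.Ico (β - (β - α + χ.meshNorm)) β ∩ Set.Icc a b,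
        r = dist vl (varFun F a t)} :=
    ⟨x' (idx α), ⟨⟨hlb, lt_of_le_of_lt (hxk0α.trans hαj) hjβ⟩, hx'a _, hx'b _⟩, rfl⟩
  have hbdd : BddAbove
      {r | ∃ t ∈ Set.Ico (β - (β - α + χ.meshNorm)) β ∩ Set.Icc a b,
        r = dist vl (varFun F a t)} := by
    refine ⟨|vl| + (eVariationOn F (Set.Icc a b)).toReal, ?_⟩
    rintro r ⟨t, ⟨_, hta, htb⟩, rfl⟩
    have h1 : varFun F a t ≤ (eVariationOn F (Set.Icc a b)).toReal :=
      ENNReal.toReal_mono hBV (eVariationOn.mono F (Set.Icc_subset_Icc le_rfl htb))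
    calc dist vl (varFun F a t) ≤ |vl| + |varFun F a t| := by
          rw [Real.dist_eq, sub_eq_add_neg]
          exact (abs_add_le _ _).trans (by rw [abs_neg])
      _ ≤ |vl| + (eVariationOn F (Set.Icc a b)).toReal := by
          rw [abs_of_nonneg (hV0 t)]
          linarith
  have hdist : vl - V (x' (idx α)) = dist vl (V (x' (idx α))) := by
    rw [Real.dist_eq, abs_of_nonneg]
    have h2 : V (x' (idx α)) ≤ V (χ.pts j) := hVmono _ _ (hxk0α.trans hαj) (hxb j)
    linarith
  calc (eVariationOn c (Set.Icc α (χ.pts j))).toReal ≤ V (χ.pts j) - V (x' (idx α)) := h1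
    _ ≤ vl - V (x' (idx α)) := by linarith
    _ = dist vl (V (x' (idx α))) := hdist
    _ ≤ _ := le_csSup hbdd hmem
end
end

section
/- Let F : [a,b] → K(ℝ^d) be of bounded variation with compact graph, satisfying at a discontinuity point ξ ∈ (a,b) both Property 1 (F(ξ) = F(ξ−) ∪ F(ξ+)) and Property 2. Then A_F(ξ) ⊆ (1/2)F(ξ−) ⊕ (1/2)F(ξ+), i.e., for every metric selection s of F, the pair (s(ξ−), s(ξ+)) is a metric pair of (F(ξ−), F(ξ+)). -/
open Filter Metric Topology Set TopologicalSpace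

noncomputable section

section AuxLemmas

variable {E : Type*} [MetricSpace E]

lemma NCedist_ne_top (A B : NonemptyCompacts E) :
    EMetric.hausdorffEdist (A : Set E) (B : Set E) ≠ ⊤ :=
  hausdorffEdist_ne_top_of_nonempty_of_bounded A.nonempty B.nonempty
    A.isCompact.isBounded B.isCompact.isBounded

lemma mem_limit {ι : Type*} (l : Filter ι) [l.NeBot] {u : ι → E}
    {A : ι → NonemptyCompacts E} {x : E} {L : NonemptyCompacts E}
    (hu : Tendsto u l (nhds x)) (hA : Tendsto A l (nhds L))
    (hm : ∀ᶠ i in l, u i ∈ (A i : Set E)) : x ∈ (L : Set E) := by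
  have h1 : Tendsto (fun i => infDist (u i) (L : Set E)) l (nhds (infDist x (L : Set E))) :=
    (continuous_infDist_pt (L : Set E)).continuousAt.tendsto.comp hu
  have h2 : Tendsto (fun i => dist (A i) L) l (nhds 0) := by
    simpa using hA.dist (tendsto_const_nhds (x := L))
  have hle : infDist x (L : Set E) ≤ 0 := by
    refine le_of_tendsto_of_tendsto h1 h2 ?_
    filter_upwards [hm] with i hi
    have : infDist (u i) (L : Set E) ≤ infDist (u i) (A i : Set E)
        + hausdorffDist (A i : Set E) (L : Set E) :=
      infDist_le_infDist_add_hausdorffDist (NCedist_ne_top _ _)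
    rw [infDist_zero_of_mem hi] at this
    simpa [NonemptyCompacts.dist_eq] using this
  have hx0 : infDist x (L : Set E) = 0 := le_antisymm hle infDist_nonneg
  exact (L.isCompact.isClosed.mem_iff_infDist_zero L.nonempty).2 hx0

lemma infDist_triple {p q : E} {S T : NonemptyCompacts E} :
    infDist p (S : Set E) ≤ infDist q (T : Set E) + (dist p q + dist T S) := by
  have h1 : infDist p (S : Set E) ≤ infDist q (S : Set E) + dist p q :=
    infDist_le_infDist_add_dist
  have h2 : infDist q (S : Set E) ≤ infDist q (T : Set E) + hausdorffDist (T : Set E) (S : Set E) :=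
    infDist_le_infDist_add_hausdorffDist (NCedist_ne_top _ _)
  have h3 : hausdorffDist (T : Set E) (S : Set E) = dist T S := (NonemptyCompacts.dist_eq).symm
  linarith

lemma infDist_limit {ι : Type*} {l : Filter ι} {v : ι → E}
    {A : ι → NonemptyCompacts E} {y : E} {L : NonemptyCompacts E}
    (hv : Tendsto v l (nhds y)) (hA : Tendsto A l (nhds L)) :
    Tendsto (fun i => infDist (v i) (A i : Set E)) l (nhds (infDist y (L : Set E))) := by
  rw [tendsto_iff_dist_tendsto_zero]
  have hb : Tendsto (fun i => dist (v i) y + dist (A i) L) l (nhds 0) := by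
    simpa using (hv.dist (tendsto_const_nhds (x := y))).add
      (hA.dist (tendsto_const_nhds (x := L)))
  refine squeeze_zero (fun i => dist_nonneg) (fun i => ?_) hb
  have k1 : infDist (v i) (A i : Set E) ≤ infDist y (L : Set E) + (dist (v i) y + dist L (A i)) :=
    infDist_triple
  have k2 : infDist y (L : Set E) ≤ infDist (v i) (A i : Set E) + (dist y (v i) + dist (A i) L) :=
    infDist_triple
  rw [Real.dist_eq, abs_sub_le_iff]
  constructor
  · have := dist_comm (A i) L
    linarith
  · have := dist_comm y (v i)
    linarith

lemma pair_limit {ι : Type*} (l : Filter ι) [l.NeBot] {u v : ι → E}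
    {A B : ι → NonemptyCompacts E} {x y : E} {LA LB : NonemptyCompacts E}
    (hA : Tendsto A l (nhds LA)) (hB : Tendsto B l (nhds LB))
    (hu : Tendsto u l (nhds x)) (hv : Tendsto v l (nhds y))
    (hp : ∀ᶠ i in l, (u i, v i) ∈ MetricPairs (A i : Set E) (B i : Set E)) :
    (x, y) ∈ MetricPairs (LA : Set E) (LB : Set E) := by
  have hxA : x ∈ (LA : Set E) := mem_limit l hu hA (hp.mono fun i h => h.1)
  have hyB : y ∈ (LB : Set E) := mem_limit l hv hB (hp.mono fun i h => h.2.1)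
  refine ⟨hxA, hyB, ?_⟩
  have hor : (∃ᶠ i in l, dist (v i) (u i) = infDist (v i) (A i : Set E)) ∨
      (∃ᶠ i in l, dist (u i) (v i) = infDist (u i) (B i : Set E)) := by
    rw [← frequently_or_distrib]
    exact (hp.mono fun i h => h.2.2.imp (fun h' => h'.2) (fun h' => h'.2)).frequently
  rcases hor with h | h
  · left
    refine ⟨hxA, ?_⟩
    set l' : Filter ι := l ⊓ 𝓟 {i | dist (v i) (u i) = infDist (v i) (A i : Set E)} with hl'
    haveI hne : l'.NeBot := Filter.frequently_iff_neBot.1 h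
    have t1 : Tendsto (fun i => dist (v i) (u i)) l' (nhds (dist y x)) :=
      (hv.dist hu).mono_left inf_le_left
    have t2 : Tendsto (fun i => infDist (v i) (A i : Set E)) l'
        (nhds (infDist y (LA : Set E))) :=
      (infDist_limit hv hA).mono_left inf_le_left
    have heq : (fun i => dist (v i) (u i)) =ᶠ[l'] (fun i => infDist (v i) (A i : Set E)) :=
      le_principal_iff.1 inf_le_right
    exact tendsto_nhds_unique (t1.congr' heq) t2
  · right
    refine ⟨hyB, ?_⟩
    set l' : Filter ι := l ⊓ 𝓟 {i | dist (u i) (v i) = infDist (u i) (B i : Set E)} with hl'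
    haveI hne : l'.NeBot := Filter.frequently_iff_neBot.1 h
    have t1 : Tendsto (fun i => dist (u i) (v i)) l' (nhds (dist x y)) :=
      (hu.dist hv).mono_left inf_le_left
    have t2 : Tendsto (fun i => infDist (u i) (B i : Set E)) l'
        (nhds (infDist x (LB : Set E))) :=
      (infDist_limit hu hB).mono_left inf_le_left
    have heq : (fun i => dist (u i) (v i)) =ᶠ[l'] (fun i => infDist (u i) (B i : Set E)) :=
      le_principal_iff.1 inf_le_right
    exact tendsto_nhds_unique (t1.congr' heq) t2

lemma combine_pairs {Fm Fp Fξ : Set E} (hP1 : Fξ = Fm ∪ Fp) {sm u sp : E}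
    (h1 : (sm, u) ∈ MetricPairs Fm Fξ) (h2 : (u, sp) ∈ MetricPairs Fξ Fp) :
    (sm, sp) ∈ MetricPairs Fm Fp := by
  obtain ⟨hsm, hu, hd1⟩ := h1
  obtain ⟨-, hsp, hd2⟩ := h2
  have hFmsub : Fm ⊆ Fξ := hP1 ▸ subset_union_left
  have hFpsub : Fp ⊆ Fξ := hP1 ▸ subset_union_right
  simp only [metricProj, Set.mem_sep_iff, Set.mem_setOf_eq] at hd1 hd2
  refine ⟨hsm, hsp, ?_⟩
  simp only [metricProj, Set.mem_sep_iff, Set.mem_setOf_eq]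
  rcases (hP1 ▸ hu : u ∈ Fm ∪ Fp) with hum | hup
  · have husm : u = sm := by
      rcases hd1 with ⟨_, hdd⟩ | ⟨_, hdd⟩
      · have : dist u sm = 0 := by rw [hdd, infDist_zero_of_mem hum]
        exact dist_eq_zero.1 this
      · have h0 : infDist sm Fξ = 0 := le_antisymm
          (by simpa using infDist_le_dist_of_mem (hFmsub hsm) (x := sm)) infDist_nonneg
        have : dist sm u = 0 := hdd.trans h0
        exact (dist_eq_zero.1 this).symm
    subst husm
    rcases hd2 with ⟨_, hdd⟩ | ⟨hmem, hdd⟩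
    · left
      refine ⟨hsm, ?_⟩
      have hle1 : infDist sp Fξ ≤ infDist sp Fm :=
        infDist_le_infDist_of_subset hFmsub ⟨u, hsm⟩
      have hle2 : infDist sp Fm ≤ dist sp u := infDist_le_dist_of_mem hsm
      linarith [hdd]
    · exact Or.inr ⟨hmem, hdd⟩
  · have husp : u = sp := by
      rcases hd2 with ⟨_, hdd⟩ | ⟨_, hdd⟩
      · have h0 : infDist sp Fξ = 0 := le_antisymm
          (by simpa using infDist_le_dist_of_mem (hFpsub hsp) (x := sp)) infDist_nonneg
        have : dist sp u = 0 := hdd.trans h0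
        exact (dist_eq_zero.1 this).symm
      · have : dist u sp = 0 := by rw [hdd, infDist_zero_of_mem hup]
        exact dist_eq_zero.1 this
    subst husp
    rcases hd1 with ⟨hmem, hdd⟩ | ⟨_, hdd⟩
    · exact Or.inl ⟨hmem, hdd⟩
    · right
      refine ⟨hsp, ?_⟩
      have hle1 : infDist sm Fξ ≤ infDist sm Fp :=
        infDist_le_infDist_of_subset hFpsub ⟨u, hup⟩
      have hle2 : infDist sm Fp ≤ dist sm u := infDist_le_dist_of_mem hup
      linarith [hdd]


section Var

variable {X : Type*} [MetricSpace X] {F : ℝ → X} {a b : ℝ}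

lemma var_fin (hBV : BoundedVariationOn F (Set.Icc a b)) {x y : ℝ} (hx : a ≤ x) (hy : y ≤ b) :
    eVariationOn F (Set.Icc x y) ≠ ⊤ := by
  refine (hBV.mono ?_)
  rcases le_or_gt x y with h | h
  · exact Set.Icc_subset_Icc hx hy
  · simp [Set.Icc_eq_empty_of_lt h]

lemma var_dist (hBV : BoundedVariationOn F (Set.Icc a b)) {x y : ℝ}
    (hx : a ≤ x) (hxy : x ≤ y) (hy : y ≤ b) :
    dist (F x) (F y) ≤ (eVariationOn F (Set.Icc x y)).toReal := by
  have h := eVariationOn.edist_le F (Set.left_mem_Icc.2 hxy) (Set.right_mem_Icc.2 hxy)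
  rw [dist_edist]
  exact ENNReal.toReal_mono (var_fin hBV hx hy) h

lemma var_mono_toReal (hBV : BoundedVariationOn F (Set.Icc a b)) {x y x' y' : ℝ}
    (hx : a ≤ x') (hy : y' ≤ b) (hsub : Set.Icc x y ⊆ Set.Icc x' y') :
    (eVariationOn F (Set.Icc x y)).toReal ≤ (eVariationOn F (Set.Icc x' y')).toReal :=
  ENNReal.toReal_mono (var_fin hBV hx hy) (eVariationOn.mono F hsub)

lemma var_add (hBV : BoundedVariationOn F (Set.Icc a b)) {x y z : ℝ}
    (hax : a ≤ x) (hxy : x ≤ y) (hyz : y ≤ z) (hzb : z ≤ b) :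
    (eVariationOn F (Set.Icc x y)).toReal + (eVariationOn F (Set.Icc y z)).toReal
      = (eVariationOn F (Set.Icc x z)).toReal := by
  have h := eVariationOn.Icc_add_Icc F hxy hyz (Set.mem_Icc.2 ⟨hxy, hyz⟩) (s := Set.Icc x z)
  have e1 : Set.Icc x z ∩ Set.Icc x y = Set.Icc x y := by
    rw [Set.Icc_inter_Icc]
    simp [hyz]
  have e2 : Set.Icc x z ∩ Set.Icc y z = Set.Icc y z := by
    rw [Set.Icc_inter_Icc]
    simp [hxy]
  rw [e1, e2, Set.inter_self] at h
  rw [← ENNReal.toReal_add (var_fin hBV hax (hyz.trans hzb)) (var_fin hBV (hax.trans hxy) hzb), h]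

lemma var_left_small (hBV : BoundedVariationOn F (Set.Icc a b)) {ξ : ℝ}
    (haξ : a < ξ) (hξb : ξ ≤ b) {ε : ℝ} (hε : 0 < ε) :
    ∃ t0, a ≤ t0 ∧ t0 < ξ ∧ ∀ p q, t0 ≤ p → p ≤ q → q < ξ →
      (eVariationOn F (Set.Icc p q)).toReal < ε := by
  set g : ℝ → ℝ := fun t => (eVariationOn F (Set.Icc a t)).toReal with hg
  have hbdd : BddAbove (g '' Set.Ico a ξ) := by
    refine ⟨(eVariationOn F (Set.Icc a b)).toReal, ?_⟩
    rintro r ⟨t, ht, rfl⟩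
    exact var_mono_toReal hBV le_rfl le_rfl (Set.Icc_subset_Icc le_rfl (ht.2.le.trans hξb))
  have hne : (g '' Set.Ico a ξ).Nonempty := ⟨g a, ⟨a, ⟨le_rfl, haξ⟩, rfl⟩⟩
  set L := sSup (g '' Set.Ico a ξ) with hL
  obtain ⟨r, ⟨t0, ht0, rfl⟩, hr⟩ := exists_lt_of_lt_csSup hne (show L - ε < L by linarith)
  refine ⟨t0, ht0.1, ht0.2, fun p q hp hpq hq => ?_⟩
  have hap : a ≤ p := ht0.1.trans hp
  have hqb : q ≤ b := (hq.le.trans hξb)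
  have hgq : g q ≤ L := le_csSup hbdd ⟨q, ⟨hap.trans hpq, hq⟩, rfl⟩
  have hsplit : g p + (eVariationOn F (Set.Icc p q)).toReal = g q :=
    var_add hBV le_rfl hap hpq hqb
  have hmono : g t0 ≤ g p :=
    var_mono_toReal hBV le_rfl (hpq.trans hqb) (Set.Icc_subset_Icc le_rfl hp)
  linarith

lemma var_right_small (hBV : BoundedVariationOn F (Set.Icc a b)) {ξ : ℝ}
    (haξ : a ≤ ξ) (hξb : ξ < b) {ε : ℝ} (hε : 0 < ε) :
    ∃ t1, ξ < t1 ∧ t1 ≤ b ∧ ∀ p q, ξ < p → p ≤ q → q ≤ t1 →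
      (eVariationOn F (Set.Icc p q)).toReal < ε := by
  set g : ℝ → ℝ := fun t => (eVariationOn F (Set.Icc t b)).toReal with hg
  have hbdd : BddAbove (g '' Set.Ioc ξ b) := by
    refine ⟨(eVariationOn F (Set.Icc a b)).toReal, ?_⟩
    rintro r ⟨t, ht, rfl⟩
    exact var_mono_toReal hBV le_rfl le_rfl (Set.Icc_subset_Icc (haξ.trans ht.1.le) le_rfl)
  have hne : (g '' Set.Ioc ξ b).Nonempty := ⟨g b, ⟨b, ⟨hξb, le_rfl⟩, rfl⟩⟩
  set L := sSup (g '' Set.Ioc ξ b) with hL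
  obtain ⟨r, ⟨t1, ht1, rfl⟩, hr⟩ := exists_lt_of_lt_csSup hne (show L - ε < L by linarith)
  refine ⟨t1, ht1.1, ht1.2, fun p q hp hpq hq => ?_⟩
  have hap : a ≤ p := haξ.trans hp.le
  have hqb : q ≤ b := hq.trans ht1.2
  have hgp : g p ≤ L := le_csSup hbdd ⟨p, ⟨hp, hpq.trans hqb⟩, rfl⟩
  have hsplit : (eVariationOn F (Set.Icc p q)).toReal + g q = g p :=
    var_add hBV hap hpq hqb le_rfl
  have hmono : g t1 ≤ g q :=
    var_mono_toReal hBV (hap.trans hpq) le_rfl (Set.Icc_subset_Icc hq le_rfl)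
  linarith

end Var


namespace IntervalPartition

variable {a b : ℝ} (χ : IntervalPartition a b)

lemma n_pos (hab : a < b) : 0 < χ.n := by
  rcases Nat.eq_zero_or_pos χ.n with h | h
  · exfalso
    have h0 : (0 : Fin (χ.n + 1)) = Fin.last χ.n := by
      apply Fin.ext; simp [h]
    have h1 : χ.pts 0 = χ.pts (Fin.last χ.n) := congrArg χ.pts h0
    rw [χ.first, χ.last] at h1
    exact absurd h1 hab.ne
  · exact h

lemma pts_mem (i : Fin (χ.n + 1)) : χ.pts i ∈ Set.Icc a b := by
  have h1 : χ.pts 0 ≤ χ.pts i := χ.mono.monotone (Fin.zero_le i)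
  have h2 : χ.pts i ≤ χ.pts (Fin.last χ.n) := χ.mono.monotone (Fin.le_last i)
  rw [χ.first] at h1
  rw [χ.last] at h2
  exact ⟨h1, h2⟩

lemma gap_le (hab : a < b) (i : Fin χ.n) :
    χ.pts i.succ - χ.pts i.castSucc ≤ χ.meshNorm := by
  haveI : Nonempty (Fin χ.n) := ⟨⟨0, χ.n_pos hab⟩⟩
  exact le_ciSup (f := fun i : Fin χ.n => χ.pts i.succ - χ.pts i.castSucc)
    (Set.Finite.bddAbove (Set.finite_range _)) i

lemma mesh_nonneg (hab : a < b) : 0 ≤ χ.meshNorm := by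
  have i0 : Fin χ.n := ⟨0, χ.n_pos hab⟩
  have h1 := χ.gap_le hab i0
  have hgap := χ.mono (Fin.castSucc_lt_succ (i := i0))
  linarith

lemma locate {t : ℝ} (hat : a ≤ t) (htb : t < b) :
    ∃ i : Fin χ.n, χ.pts i.castSucc ≤ t ∧ t < χ.pts i.succ := by
  classical
  have hSne : (Finset.univ.filter (fun m : Fin (χ.n + 1) => χ.pts m ≤ t)).Nonempty :=
    ⟨0, by simp [χ.first, hat]⟩
  obtain ⟨M, hMS, hMmax⟩ := Finset.exists_max_image _ id hSne
  have hMt : χ.pts M ≤ t := (Finset.mem_filter.1 hMS).2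
  have hMne : M ≠ Fin.last χ.n := by
    intro h
    rw [h, χ.last] at hMt
    exact absurd hMt (not_le.2 htb)
  refine ⟨M.castPred hMne, ?_, ?_⟩
  · rw [Fin.castSucc_castPred]
    exact hMt
  · by_contra hcon
    push_neg at hcon
    have hmem : (M.castPred hMne).succ ∈
        Finset.univ.filter (fun m : Fin (χ.n + 1) => χ.pts m ≤ t) := by
      simp [hcon]
    have hle : (M.castPred hMne).succ ≤ M := hMmax _ hmem
    have hlt : (M.castPred hMne).castSucc < (M.castPred hMne).succ := Fin.castSucc_lt_succ
    rw [Fin.castSucc_castPred] at hlt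
    exact absurd (lt_of_lt_of_le hlt hle) (lt_irrefl _)

end IntervalPartition

section Chain

variable {E : Type*} [MetricSpace E] {a b : ℝ} {F : ℝ → NonemptyCompacts E}

lemma pair_dist_le {A B : NonemptyCompacts E} {u v : E}
    (h : (u, v) ∈ MetricPairs (A : Set E) (B : Set E)) : dist u v ≤ dist A B := by
  obtain ⟨hu, hv, hd⟩ := h
  rcases hd with ⟨-, hdd⟩ | ⟨-, hdd⟩
  · rw [dist_comm u v, hdd]
    refine (infDist_le_hausdorffDist_of_mem hv (NCedist_ne_top B A)).trans ?_
    rw [hausdorffDist_comm]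
    exact le_of_eq (NonemptyCompacts.dist_eq).symm
  · rw [hdd]
    exact (infDist_le_hausdorffDist_of_mem hu (NCedist_ne_top A B)).trans
      (le_of_eq (NonemptyCompacts.dist_eq).symm)

lemma chain_telescope (hBV : BoundedVariationOn F (Set.Icc a b)) (χ : IntervalPartition a b)
    {y : Fin (χ.n + 1) → E}
    (hpair : ∀ i : Fin χ.n, (y i.castSucc, y i.succ) ∈
      MetricPairs (F (χ.pts i.castSucc) : Set E) (F (χ.pts i.succ) : Set E))
    {m m' : Fin (χ.n + 1)} (hmm : m ≤ m') :
    dist (y m) (y m') ≤ (eVariationOn F (Set.Icc (χ.pts m) (χ.pts m'))).toReal := by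
  induction m' using Fin.induction with
  | zero =>
    have h0 : m = 0 := le_antisymm hmm (Fin.zero_le m)
    subst h0
    simp [ENNReal.toReal_nonneg]
  | succ i ih =>
    rcases eq_or_lt_of_le hmm with rfl | hlt
    · simp [ENNReal.toReal_nonneg]
    · have h1 : m ≤ i.castSucc := Fin.le_castSucc_iff.2 hlt
      have step : dist (y i.castSucc) (y i.succ) ≤
          (eVariationOn F (Set.Icc (χ.pts i.castSucc) (χ.pts i.succ))).toReal :=
        (pair_dist_le (hpair i)).trans (var_dist hBV (χ.pts_mem _).1
          (χ.mono (Fin.castSucc_lt_succ (i := i))).le (χ.pts_mem _).2)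
      have tri := dist_triangle (y m) (y i.castSucc) (y i.succ)
      have hadd := var_add hBV (χ.pts_mem m).1 (χ.mono.monotone h1)
        (χ.mono (Fin.castSucc_lt_succ (i := i))).le (χ.pts_mem _).2
      have ihh := ih h1
      linarith

end Chain

section OneSided

variable {E : Type*} [MetricSpace E] {a b ξ : ℝ} {F : ℝ → NonemptyCompacts E}
  {χ : ℕ → IntervalPartition a b} {c : ℕ → ℝ → E} {y : ∀ k, Fin ((χ k).n + 1) → E} {s : ℝ → E}

lemma left_tendsto (hab : a < b) (hax : a < ξ) (hxb : ξ < b)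
    (hBV : BoundedVariationOn F (Set.Icc a b))
    (hpair : ∀ k (i : Fin (χ k).n), ((y k) i.castSucc, (y k) i.succ) ∈
      MetricPairs (F ((χ k).pts i.castSucc) : Set E) (F ((χ k).pts i.succ) : Set E))
    (hconst : ∀ k (i : Fin (χ k).n), ∀ t ∈ Set.Ico ((χ k).pts i.castSucc) ((χ k).pts i.succ),
      c k t = y k i.castSucc)
    (hmesh : Tendsto (fun k => (χ k).meshNorm) atTop (nhds 0))
    (hconv : ∀ x ∈ Set.Icc a b, Tendsto (fun k => c k x) atTop (nhds (s x)))
    {sm : E} (hsm : Tendsto s (nhdsWithin ξ (Set.Ico a ξ)) (nhds sm))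
    {l : Filter ℕ} (hl : l ≤ atTop) {idx : ∀ k, Fin ((χ k).n + 1)}
    (hidx1 : ∀ᶠ k in l, (χ k).pts (idx k) < ξ)
    (hidx2 : ∀ᶠ k in l, ξ - (χ k).pts (idx k) ≤ 2 * (χ k).meshNorm) :
    Tendsto (fun k => y k (idx k)) l (nhds sm) := by
  rw [Metric.tendsto_nhds]
  intro ε hε
  obtain ⟨t0, ht0a, ht0ξ, ht0⟩ := var_left_small hBV hax hxb.le (show 0 < ε / 3 by linarith)
  haveI : (nhdsWithin ξ (Set.Ico a ξ)).NeBot := by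
    apply mem_closure_iff_nhdsWithin_neBot.1
    rw [closure_Ico hax.ne]
    exact ⟨hax.le, le_rfl⟩
  have hev : ∀ᶠ x in nhdsWithin ξ (Set.Ico a ξ),
      dist (s x) sm < ε / 3 ∧ t0 < x ∧ x ∈ Set.Ico a ξ := by
    refine ((Metric.tendsto_nhds.1 hsm (ε / 3) (by linarith)).and ?_).and
      self_mem_nhdsWithin |>.mono fun x hx => ⟨hx.1.1, hx.1.2, hx.2⟩
    exact nhdsWithin_le_nhds (Ioi_mem_nhds ht0ξ)
  obtain ⟨t', ht's, ht't0, ht'mem⟩ := hev.exists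
  have hδpos : 0 < min ((ξ - t') / 2) (t' - t0) := by
    rcases ht'mem with ⟨hta, htξ⟩
    exact lt_min (by linarith) (by linarith)
  have hmesh' : ∀ᶠ k in l, (χ k).meshNorm < min ((ξ - t') / 2) (t' - t0) :=
    hl (hmesh (Iio_mem_nhds hδpos))
  have hconv' : ∀ᶠ k in l, dist (c k t') (s t') < ε / 3 :=
    hl (Metric.tendsto_nhds.1 (hconv t' ⟨ht'mem.1, (ht'mem.2.trans hxb).le⟩) _ (by linarith))
  filter_upwards [hidx1, hidx2, hmesh', hconv'] with k h1 h2 h3 h4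
  obtain ⟨m, hm1, hm2⟩ := (χ k).locate (t := t') ht'mem.1 (ht'mem.2.trans hxb)
  have hck : c k t' = y k m.castSucc := hconst k m t' ⟨hm1, hm2⟩
  have hgap : (χ k).pts m.succ - (χ k).pts m.castSucc ≤ (χ k).meshNorm := (χ k).gap_le hab m
  have h3a := (lt_min_iff.1 h3).1
  have h3b := (lt_min_iff.1 h3).2
  have hmlt : t0 < (χ k).pts m.castSucc := by linarith
  have hptsidx : t' < (χ k).pts (idx k) := by linarith
  have horder : m.castSucc ≤ idx k :=
    ((χ k).mono.lt_iff_lt.1 (lt_of_le_of_lt hm1 hptsidx)).le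
  have htel : dist (y k m.castSucc) (y k (idx k)) ≤
      (eVariationOn F (Set.Icc ((χ k).pts m.castSucc) ((χ k).pts (idx k)))).toReal :=
    chain_telescope hBV (χ k) (hpair k) horder
  have hvar : (eVariationOn F (Set.Icc ((χ k).pts m.castSucc) ((χ k).pts (idx k)))).toReal
      < ε / 3 := ht0 _ _ hmlt.le ((χ k).mono.monotone horder) h1
  have tri := dist_triangle4 (y k (idx k)) (c k t') (s t') sm
  rw [hck] at tri h4
  have hcomm : dist (y k (idx k)) (y k m.castSucc) = dist (y k m.castSucc) (y k (idx k)) :=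
    dist_comm _ _
  linarith

lemma right_tendsto (hab : a < b) (hax : a < ξ) (hxb : ξ < b)
    (hBV : BoundedVariationOn F (Set.Icc a b))
    (hpair : ∀ k (i : Fin (χ k).n), ((y k) i.castSucc, (y k) i.succ) ∈
      MetricPairs (F ((χ k).pts i.castSucc) : Set E) (F ((χ k).pts i.succ) : Set E))
    (hconst : ∀ k (i : Fin (χ k).n), ∀ t ∈ Set.Ico ((χ k).pts i.castSucc) ((χ k).pts i.succ),
      c k t = y k i.castSucc)
    (hmesh : Tendsto (fun k => (χ k).meshNorm) atTop (nhds 0))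
    (hconv : ∀ x ∈ Set.Icc a b, Tendsto (fun k => c k x) atTop (nhds (s x)))
    {sp : E} (hsp : Tendsto s (nhdsWithin ξ (Set.Ioc ξ b)) (nhds sp))
    {l : Filter ℕ} (hl : l ≤ atTop) {idx : ∀ k, Fin ((χ k).n + 1)}
    (hidx1 : ∀ᶠ k in l, ξ < (χ k).pts (idx k))
    (hidx2 : ∀ᶠ k in l, (χ k).pts (idx k) - ξ ≤ 2 * (χ k).meshNorm) :
    Tendsto (fun k => y k (idx k)) l (nhds sp) := by
  rw [Metric.tendsto_nhds]
  intro ε hε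
  obtain ⟨t1, ht1ξ, ht1b, ht1⟩ := var_right_small hBV hax.le hxb (show 0 < ε / 3 by linarith)
  haveI : (nhdsWithin ξ (Set.Ioc ξ b)).NeBot := by
    apply mem_closure_iff_nhdsWithin_neBot.1
    rw [closure_Ioc hxb.ne]
    exact ⟨le_rfl, hxb.le⟩
  have hev : ∀ᶠ x in nhdsWithin ξ (Set.Ioc ξ b),
      dist (s x) sp < ε / 3 ∧ x < t1 ∧ x ∈ Set.Ioc ξ b := by
    refine ((Metric.tendsto_nhds.1 hsp (ε / 3) (by linarith)).and ?_).and
      self_mem_nhdsWithin |>.mono fun x hx => ⟨hx.1.1, hx.1.2, hx.2⟩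
    exact nhdsWithin_le_nhds (Iio_mem_nhds ht1ξ)
  obtain ⟨t', ht's, ht't1, ht'mem⟩ := hev.exists
  have hδpos : 0 < (t' - ξ) / 2 := by
    rcases ht'mem with ⟨htξ, htb⟩
    linarith
  have hmesh' : ∀ᶠ k in l, (χ k).meshNorm < (t' - ξ) / 2 :=
    hl (hmesh (Iio_mem_nhds hδpos))
  have hconv' : ∀ᶠ k in l, dist (c k t') (s t') < ε / 3 :=
    hl (Metric.tendsto_nhds.1 (hconv t' ⟨(hax.trans ht'mem.1).le, ht'mem.2⟩) _ (by linarith))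
  filter_upwards [hidx1, hidx2, hmesh', hconv'] with k h1 h2 h3 h4
  obtain ⟨m, hm1, hm2⟩ := (χ k).locate (t := t') (hax.trans ht'mem.1).le (ht't1.trans_le ht1b)
  have hck : c k t' = y k m.castSucc := hconst k m t' ⟨hm1, hm2⟩
  have hptsidx : (χ k).pts (idx k) < t' := by linarith
  have horder : idx k ≤ m.castSucc := by
    by_contra hcon
    push_neg at hcon
    have hsucc : m.succ ≤ idx k := hcon
    have := (χ k).mono.monotone hsucc
    linarith
  have htel : dist (y k (idx k)) (y k m.castSucc) ≤
      (eVariationOn F (Set.Icc ((χ k).pts (idx k)) ((χ k).pts m.castSucc))).toReal :=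
    chain_telescope hBV (χ k) (hpair k) horder
  have hvar : (eVariationOn F (Set.Icc ((χ k).pts (idx k)) ((χ k).pts m.castSucc))).toReal
      < ε / 3 := ht1 _ _ h1 ((χ k).mono.monotone horder) (hm1.trans ht't1.le)
  have tri := dist_triangle4 (y k (idx k)) (c k t') (s t') sp
  rw [hck] at tri h4
  linarith

end OneSided


end AuxLemmas

/-- under Properties 1 and 2 at a discontinuity point `ξ`,
`A_F(ξ) ⊆ (1/2)F(ξ-) ⊕ (1/2)F(ξ+)`: for every metric selection `s`, the pair
`(s(ξ-), s(ξ+))` is a metric pair of `(F(ξ-), F(ξ+))`. -/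
theorem stmt_16 {d : ℕ} (a b : ℝ) (hab : a < b)
    (F : ℝ → NonemptyCompacts (EuclideanSpace ℝ (Fin d)))
    (hBV : BoundedVariationOn F (Set.Icc a b))
    (hgraph : HasCompactGraph (fun t => (F t : Set (EuclideanSpace ℝ (Fin d)))) a b)
    (ξ : ℝ) (hξ : ξ ∈ Set.Ioo a b)
    (hdisc : ¬ ContinuousWithinAt F (Set.Icc a b) ξ)
    (Fm Fp : NonemptyCompacts (EuclideanSpace ℝ (Fin d)))
    (hFm : Filter.Tendsto F (nhdsWithin ξ (Set.Ico a ξ)) (nhds Fm))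
    (hFp : Filter.Tendsto F (nhdsWithin ξ (Set.Ioc ξ b)) (nhds Fp))
    (hP1 : (F ξ : Set (EuclideanSpace ℝ (Fin d))) =
      (Fm : Set (EuclideanSpace ℝ (Fin d))) ∪ (Fp : Set (EuclideanSpace ℝ (Fin d))))
    (hP2 : Property2 (fun t => (F t : Set (EuclideanSpace ℝ (Fin d)))) a b ξ
      (Fm : Set (EuclideanSpace ℝ (Fin d))) (Fp : Set (EuclideanSpace ℝ (Fin d)))) :
    (∀ (s : ℝ → EuclideanSpace ℝ (Fin d)) (sm sp : EuclideanSpace ℝ (Fin d)),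
      IsMetricSelection (fun t => (F t : Set (EuclideanSpace ℝ (Fin d)))) a b s →
      Filter.Tendsto s (nhdsWithin ξ (Set.Ico a ξ)) (nhds sm) →
      Filter.Tendsto s (nhdsWithin ξ (Set.Ioc ξ b)) (nhds sp) →
      (sm, sp) ∈ MetricPairs (Fm : Set (EuclideanSpace ℝ (Fin d)))
        (Fp : Set (EuclideanSpace ℝ (Fin d)))) ∧
    limitSet (fun t => (F t : Set (EuclideanSpace ℝ (Fin d)))) a b ξ ⊆
      metricAvg (Fm : Set (EuclideanSpace ℝ (Fin d)))
        (Fp : Set (EuclideanSpace ℝ (Fin d))) := by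
  obtain ⟨hax, hxb⟩ := hξ
  set E := EuclideanSpace ℝ (Fin d)
  have main : ∀ (s : ℝ → E) (sm sp : E),
      IsMetricSelection (fun t => (F t : Set E)) a b s →
      Filter.Tendsto s (nhdsWithin ξ (Set.Ico a ξ)) (nhds sm) →
      Filter.Tendsto s (nhdsWithin ξ (Set.Ioc ξ b)) (nhds sp) →
      (sm, sp) ∈ MetricPairs (Fm : Set E) (Fp : Set E) := by
    intro s sm sp hsel hsm hsp
    obtain ⟨hmem, χ, c, hchain, hmesh, hconv⟩ := hsel
    choose y hpair hconst hlast using hchain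
    simp only [] at hpair
    have hξmem : ξ ∈ Set.Icc a b := ⟨hax.le, hxb.le⟩
    choose j hj1 hj2 using fun k => (χ k).locate (t := ξ) hax.le hxb
    have hgap : ∀ k, (χ k).pts (j k).succ - (χ k).pts (j k).castSucc ≤ (χ k).meshNorm :=
      fun k => (χ k).gap_le hab (j k)
    have hmnn : ∀ k, 0 ≤ (χ k).meshNorm := fun k => (χ k).mesh_nonneg hab
    have hyL : ∀ k, c k ξ = y k (j k).castSucc := fun k => hconst k (j k) ξ ⟨hj1 k, hj2 k⟩
    have hcξ : Tendsto (fun k => y k (j k).castSucc) atTop (nhds (s ξ)) :=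
      (hconv ξ hξmem).congr hyL
    have hR : Tendsto (fun k => y k (j k).succ) atTop (nhds sp) := by
      refine right_tendsto hab hax hxb hBV hpair hconst hmesh hconv hsp le_rfl
        (Eventually.of_forall hj2) (Eventually.of_forall fun k => ?_)
      have h1 := hgap k
      have h2 := hj1 k
      have h3 := hmnn k
      linarith
    have hxRt : Tendsto (fun k => (χ k).pts (j k).succ) atTop
        (nhdsWithin ξ (Set.Ioc ξ b)) := by
      rw [tendsto_nhdsWithin_iff]
      constructor
      · refine tendsto_of_tendsto_of_tendsto_of_le_of_le (g := fun _ => ξ)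
          (h := fun k => ξ + (χ k).meshNorm) tendsto_const_nhds
          (by simpa using (tendsto_const_nhds (x := ξ)).add hmesh)
          (fun k => (hj2 k).le) (fun k => ?_)
        show (χ k).pts (j k).succ ≤ ξ + (χ k).meshNorm
        have h1 := hgap k
        have h2 := hj1 k
        linarith
      · exact Eventually.of_forall fun k => ⟨hj2 k, ((χ k).pts_mem _).2⟩
    have hFxR : Tendsto (fun k => F ((χ k).pts (j k).succ)) atTop (nhds Fp) :=
      hFp.comp hxRt
    by_cases hcase : ∃ᶠ k in atTop, (χ k).pts (j k).castSucc < ξ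
    · set l1 := atTop ⊓ 𝓟 {k | (χ k).pts (j k).castSucc < ξ} with hl1
      haveI : l1.NeBot := Filter.frequently_iff_neBot.1 hcase
      have hevP : ∀ᶠ k in l1, (χ k).pts (j k).castSucc < ξ :=
        le_principal_iff.1 inf_le_right
      have hL : Tendsto (fun k => y k (j k).castSucc) l1 (nhds sm) := by
        refine left_tendsto hab hax hxb hBV hpair hconst hmesh hconv hsm inf_le_left hevP
          (Eventually.of_forall fun k => ?_)
        have h1 := hgap k
        have h2 := hj2 k
        have h3 := hmnn k
        linarith
      have hxLt : Tendsto (fun k => (χ k).pts (j k).castSucc) l1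
          (nhdsWithin ξ (Set.Ico a ξ)) := by
        rw [tendsto_nhdsWithin_iff]
        constructor
        · refine tendsto_of_tendsto_of_tendsto_of_le_of_le (g := fun k => ξ - (χ k).meshNorm)
            (h := fun _ => ξ)
            (by simpa using (tendsto_const_nhds (x := ξ)).sub (hmesh.mono_left inf_le_left))
            tendsto_const_nhds (fun k => ?_) (fun k => (hj1 k))
          show ξ - (χ k).meshNorm ≤ (χ k).pts (j k).castSucc
          have h1 := hgap k
          have h2 := hj2 k
          linarith
        · exact hevP.mono fun k hk => ⟨((χ k).pts_mem _).1, hk⟩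
      have hFxL : Tendsto (fun k => F ((χ k).pts (j k).castSucc)) l1 (nhds Fm) :=
        hFm.comp hxLt
      exact pair_limit l1 hFxL (hFxR.mono_left inf_le_left) hL (hR.mono_left inf_le_left)
        (Eventually.of_forall fun k => hpair k (j k))
    · have heq : ∀ᶠ k in atTop, (χ k).pts (j k).castSucc = ξ :=
        (not_frequently.1 hcase).mono fun k hk => le_antisymm (hj1 k) (not_lt.1 hk)
      set l2 := atTop ⊓ 𝓟 {k | (χ k).pts (j k).castSucc = ξ} with hl2
      haveI : l2.NeBot := Filter.frequently_iff_neBot.1 heq.frequently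
      have hevQ : ∀ᶠ k in l2, (χ k).pts (j k).castSucc = ξ :=
        le_principal_iff.1 inf_le_right
      have hne0 : ∀ᶠ k in l2, (j k).castSucc ≠ 0 := by
        refine hevQ.mono fun k hk h0 => ?_
        rw [h0, (χ k).first] at hk
        exact absurd hk hax.ne
      set idx2 : ∀ k, Fin ((χ k).n + 1) := fun k =>
        if h : (j k).castSucc = 0 then 0 else (((j k).castSucc).pred h).castSucc with hidx2def
      have hidx2eq : ∀ k (h : (j k).castSucc ≠ 0),
          idx2 k = (((j k).castSucc).pred h).castSucc := fun k h => dif_neg h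
      have hsucc : ∀ k (h : (j k).castSucc ≠ 0),
          (((j k).castSucc).pred h).succ = (j k).castSucc := fun k h => Fin.succ_pred _ h
      have hidx2lt : ∀ᶠ k in l2, (χ k).pts (idx2 k) < ξ := by
        filter_upwards [hevQ, hne0] with k hk h0
        rw [hidx2eq k h0, ← hk]
        conv_rhs => rw [← hsucc k h0]
        exact (χ k).mono Fin.castSucc_lt_succ
      have hidx2var : ∀ᶠ k in l2, ξ - (χ k).pts (idx2 k) ≤ 2 * (χ k).meshNorm := by
        filter_upwards [hevQ, hne0] with k hk h0
        rw [hidx2eq k h0, ← hk]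
        have hg := (χ k).gap_le hab (((j k).castSucc).pred h0)
        rw [hsucc k h0] at hg
        have h3 := hmnn k
        linarith
      have hLL : Tendsto (fun k => y k (idx2 k)) l2 (nhds sm) :=
        left_tendsto hab hax hxb hBV hpair hconst hmesh hconv hsm inf_le_left hidx2lt hidx2var
      have hxLLt : Tendsto (fun k => (χ k).pts (idx2 k)) l2
          (nhdsWithin ξ (Set.Ico a ξ)) := by
        rw [tendsto_nhdsWithin_iff]
        constructor
        · have h2m : Tendsto (fun k => 2 * (χ k).meshNorm) atTop (nhds 0) := by
            simpa using hmesh.const_mul 2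
          have haux : Tendsto (fun k : ℕ => ξ - 2 * (χ k).meshNorm) l2 (nhds ξ) := by
            have := (tendsto_const_nhds (x := ξ) (f := (atTop : Filter ℕ))).sub h2m
            simpa using this.mono_left inf_le_left
          refine tendsto_of_tendsto_of_tendsto_of_le_of_le' (g := fun k => ξ - 2 * (χ k).meshNorm)
            (h := fun _ => ξ) haux tendsto_const_nhds
            (hidx2var.mono fun k hk => by
              show ξ - 2 * (χ k).meshNorm ≤ (χ k).pts (idx2 k)
              linarith)
            (hidx2lt.mono fun k hk => hk.le)
        · exact hidx2lt.mono fun k hk => ⟨((χ k).pts_mem _).1, hk⟩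
      have hFLL : Tendsto (fun k => F ((χ k).pts (idx2 k))) l2 (nhds Fm) := hFm.comp hxLLt
      have hFxLconst : Tendsto (fun k => F ((χ k).pts (j k).castSucc)) l2 (nhds (F ξ)) :=
        tendsto_const_nhds.congr' (hevQ.mono fun k hk => by
          show F ξ = F ((χ k).pts (j k).castSucc)
          rw [hk])
      have hpairA : ∀ᶠ k in l2, (y k (idx2 k), y k (j k).castSucc) ∈
          MetricPairs ((F ((χ k).pts (idx2 k))) : Set E) ((F ((χ k).pts (j k).castSucc)) : Set E) := by
        filter_upwards [hne0] with k h0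
        have hp := hpair k (((j k).castSucc).pred h0)
        rw [hsucc k h0] at hp
        rw [hidx2eq k h0]
        exact hp
      have h1 : (sm, s ξ) ∈ MetricPairs (Fm : Set E) ((F ξ) : Set E) :=
        pair_limit l2 hFLL hFxLconst hLL (hcξ.mono_left inf_le_left) hpairA
      have h2 : (s ξ, sp) ∈ MetricPairs ((F ξ) : Set E) (Fp : Set E) :=
        pair_limit l2 hFxLconst (hFxR.mono_left inf_le_left)
          (hcξ.mono_left inf_le_left) (hR.mono_left inf_le_left)
          (Eventually.of_forall fun k => hpair k (j k))
      exact combine_pairs hP1 h1 h2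
  refine ⟨main, ?_⟩
  rintro v ⟨s, sm, sp, hsel, h1, h2, rfl⟩
  exact ⟨(sm, sp), main s sm sp hsel h1 h2, rfl⟩
end
end
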